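/- arXiv:2104.09595 — 3 statements merged into one kernel-verified Lean document; each statement's English description precedes it below -/
import Mathlib

section
/- Let (Σ, 𝒜) be a measurable space, μ a probability measure on Σ, Φ ⊆ Σ a measurable set with μ(Φ) = 1, and g : Σ → Σ a measurable map. Let ε ∈ (0,1) and β ∈ (0,1), and let N ∈ ℕ satisfy N ≥ ln(β)/ln(1−ε). If μ({σ : g(σ) ∉ Φ}) > ε (i.e., Φ is not ε-almost forward invariant for g), then the product measure ⨂_{i ∈ Fin N} μ of the event {x : (Fin N → Σ) | ∀ i, g(x i) ∈ Φ} is at most β. Consequently, if all N independent sampled scenarios pass the invariance check, then with confidence at least 1−β the set Φ is ε-almost forward invariant for g. -/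
open MeasureTheory
open scoped ENNReal

theorem stmt_2 {St : Type*} [MeasurableSpace St] (μ : Measure St)
    [IsProbabilityMeasure μ] (Φ : Set St) (hΦ : MeasurableSet Φ) (hμΦ : μ Φ = 1)
    (g : St → St) (hg : Measurable g) (ε β : ℝ) (hε : ε ∈ Set.Ioo (0 : ℝ) 1)
    (hβ : β ∈ Set.Ioo (0 : ℝ) 1) (N : ℕ)
    (hN : (N : ℝ) ≥ Real.log β / Real.log (1 - ε))
    (hfail : μ {σ | g σ ∉ Φ} > ENNReal.ofReal ε) :
    (Measure.pi fun _ : Fin N => μ) {x : Fin N → St | ∀ i, g (x i) ∈ Φ} ≤ ENNReal.ofReal β := by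
  obtain ⟨hε0, hε1⟩ := hε
  obtain ⟨hβ0, hβ1⟩ := hβ
  have h1ε0 : (0:ℝ) < 1 - ε := by linarith
  have h1ε1 : 1 - ε < 1 := by linarith
  -- real inequality: (1-ε)^N ≤ β
  have hlogneg : Real.log (1 - ε) < 0 := Real.log_neg h1ε0 h1ε1
  have hreal : (1 - ε) ^ N ≤ β := by
    have h1 : (N : ℝ) * Real.log (1 - ε) ≤ Real.log β := by
      rw [ge_iff_le, div_le_iff_of_neg hlogneg] at hN
      linarith
    have h2 : Real.log ((1 - ε) ^ N) ≤ Real.log β := by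
      rwa [Real.log_pow]
    exact (Real.log_le_log_iff (pow_pos h1ε0 N) hβ0).mp h2
  -- measure of preimage is ≤ ofReal (1-ε)
  have hA : MeasurableSet (g ⁻¹' Φ) := hg hΦ
  have hcompl : μ (g ⁻¹' Φ)ᶜ = 1 - μ (g ⁻¹' Φ) := prob_compl_eq_one_sub hA
  have hset : {σ | g σ ∉ Φ} = (g ⁻¹' Φ)ᶜ := rfl
  have hle : μ (g ⁻¹' Φ) ≤ ENNReal.ofReal (1 - ε) := by
    by_contra h
    push_neg at h
    have h3 : 1 - μ (g ⁻¹' Φ) ≤ 1 - ENNReal.ofReal (1 - ε) :=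
      tsub_le_tsub_left h.le 1
    have h4 : (1 : ℝ≥0∞) - ENNReal.ofReal (1 - ε) = ENNReal.ofReal ε := by
      rw [← ENNReal.ofReal_one, ← ENNReal.ofReal_sub _ h1ε0.le]
      ring_nf
    rw [hset, hcompl] at hfail
    rw [h4] at h3
    exact absurd (lt_of_lt_of_le hfail h3) (lt_irrefl _)
  -- compute product measure
  have hsep : {x : Fin N → St | ∀ i, g (x i) ∈ Φ} =
      Set.pi Set.univ (fun _ : Fin N => g ⁻¹' Φ) := by
    ext x; simp [Set.mem_pi]
  rw [hsep, Measure.pi_pi]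
  calc (∏ _i : Fin N, μ (g ⁻¹' Φ)) ≤ ∏ _i : Fin N, ENNReal.ofReal (1 - ε) :=
        Finset.prod_le_prod' fun _ _ => hle
    _ = ENNReal.ofReal ((1 - ε) ^ N) := by
        rw [Finset.prod_const, Finset.card_univ, Fintype.card_fin, ENNReal.ofReal_pow h1ε0.le]
    _ ≤ ENNReal.ofReal β := ENNReal.ofReal_le_ofReal hreal
end

section
/- Let E be a real normed vector space, let Φ ⊆ E, let Γ ⊆ U and W be nonempty sets, and let f : E → U → W → E. Suppose there is σ̄ ≥ 0 such that ‖f(σ, u, ω) − σ‖ ≤ σ̄ for all σ ∈ Φ, u ∈ Γ, ω ∈ W (uniformly bounded one-step displacement). Define the σ̄-boundary set Φ^σ̄ = {σ ∈ Φ : the infimum distance from σ to the frontier of Φ is at most σ̄} (equivalently, {σ ∈ Φ : 0 ≥ d_s(σ, ∂Φ) ≥ −σ̄}). Then f(σ, u, ω) ∈ Φ for all σ ∈ Φ, u ∈ Γ, ω ∈ W if and only if f(σ, u, ω) ∈ Φ for all σ ∈ Φ^σ̄, u ∈ Γ, ω ∈ W. In particular, Φ is robustly controlled forward invariant with respect to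 Γ if and only if the one-step condition holds on the σ̄-boundary set alone. -/
lemma seg_frontier {E : Type*} [NormedAddCommGroup E] [NormedSpace ℝ E]
    {Φ : Set E} {x y : E} (hx : x ∈ Φ) (hy : y ∉ Φ) :
    ∃ z ∈ frontier Φ, z ∈ segment ℝ x y := by
  by_contra h
  push_neg at h
  have hconn : IsPreconnected (segment ℝ x y) := (convex_segment x y).isPreconnected
  have hsub : segment ℝ x y ⊆ interior Φ ∪ interior Φᶜ := by
    intro z hz
    by_cases hzΦ : z ∈ Φ
    · left
      by_contra hzi
      exact h z ⟨subset_closure hzΦ, hzi⟩ hz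
    · right
      rw [interior_compl]
      by_contra hzc'
      simp only [Set.mem_compl_iff, not_not] at hzc'
      exact h z ⟨hzc', fun hi => hzΦ (interior_subset hi)⟩ hz
  have hxint : x ∈ interior Φ := by
    have := hsub (left_mem_segment ℝ x y)
    rcases this with h1 | h1
    · exact h1
    · exact absurd (interior_subset h1) (by simpa using hx)
  have hyint : y ∈ interior Φᶜ := by
    have := hsub (right_mem_segment ℝ x y)
    rcases this with h1 | h1
    · exact absurd (interior_subset h1) hy
    · exact h1
  obtain ⟨z, hz⟩ := hconn (interior Φ) (interior Φᶜ) isOpen_interior isOpen_interior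
    hsub ⟨x, left_mem_segment ℝ x y, hxint⟩ ⟨y, right_mem_segment ℝ x y, hyint⟩
  exact (interior_subset hz.2.2 : z ∈ Φᶜ) (interior_subset hz.2.1)

theorem stmt_7 {E U W : Type*} [NormedAddCommGroup E] [NormedSpace ℝ E]
    (Φ : Set E) (Γ : Set U) (W' : Set W) (hΓ : Γ.Nonempty) (hW : W'.Nonempty)
    (f : E → U → W → E) (σbar : ℝ) (hσbar : 0 ≤ σbar)
    (hbound : ∀ σ ∈ Φ, ∀ u ∈ Γ, ∀ ω ∈ W', ‖f σ u ω - σ‖ ≤ σbar) :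
    (∀ σ ∈ Φ, ∀ u ∈ Γ, ∀ ω ∈ W', f σ u ω ∈ Φ) ↔
      (∀ σ ∈ {σ ∈ Φ | Metric.infDist σ (frontier Φ) ≤ σbar},
        ∀ u ∈ Γ, ∀ ω ∈ W', f σ u ω ∈ Φ) := by
  constructor
  · intro h σ hσ u hu ω hω
    exact h σ hσ.1 u hu ω hω
  · intro h σ hσ u hu ω hω
    by_cases hd : Metric.infDist σ (frontier Φ) ≤ σbar
    · exact h σ ⟨hσ, hd⟩ u hu ω hω
    · push_neg at hd
      by_contra hf
      obtain ⟨z, hzf, hzs⟩ := seg_frontier hσ hf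
      obtain ⟨a, b, ha, hb, hab, hz⟩ := hzs
      have hdist : dist σ z ≤ dist σ (f σ u ω) := by
        rw [← hz]
        have he : σ - (a • σ + b • f σ u ω) = b • (σ - f σ u ω) := by
          have : a = 1 - b := by linarith
          subst this
          module
        rw [dist_eq_norm, he, norm_smul, dist_eq_norm]
        have hb1 : b ≤ 1 := by linarith
        calc ‖b‖ * ‖σ - f σ u ω‖ ≤ 1 * ‖σ - f σ u ω‖ := by
              apply mul_le_mul_of_nonneg_right _ (norm_nonneg _)
              rw [Real.norm_eq_abs, abs_of_nonneg hb]; exact hb1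
          _ = ‖σ - f σ u ω‖ := one_mul _
      have h1 : Metric.infDist σ (frontier Φ) ≤ dist σ z := Metric.infDist_le_dist_of_mem hzf
      have h2 : dist σ (f σ u ω) ≤ σbar := by
        rw [dist_eq_norm, norm_sub_rev]
        exact hbound σ hσ u hu ω hω
      linarith
end

section
/- Let E be a metric space, let Φ ⊆ E be a closed set with nonempty frontier, let U and W be types, let Γ ⊆ U and W' ⊆ W be nonempty sets, and let f : E → U → W → E. For σ ∈ Φ and u ∈ Γ, write h(σ, u) = sup_{ω ∈ W'} d_s(f(σ, u, ω), Φ) for the worst-case signed distance of the successor state to the boundary of Φ, and assume for each σ ∈ Φ and u ∈ Γ that the set {d_s(f(σ, u, ω), Φ) : ω ∈ W'} is bounded above. Suppose that for every σ ∈ Φ there exists an adversarial action u* ∈ Γ satisfying h(σ, u) ≤ h(σ, u*) for all u ∈ Γ, and such that f(σ, u*, ω) ∈ Φ for all ω ∈ W'. Then f(σ, u, ω) ∈ Φ for every σ ∈ Φ, u ∈ Γ, and ω ∈ W'; consequently Φ is robustly controlled forward invariant with respect to the full admissible action set Γ. -/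
open Classical in
/-- Signed point-to-set distance: the distance to the frontier of `Φ`,
negated when the point belongs to `Φ`. -/
noncomputable def signedPtSetDist {X : Type*} [MetricSpace X] (x : X) (Φ : Set X) : ℝ :=
  if x ∈ Φ then -(Metric.infDist x (frontier Φ)) else Metric.infDist x (frontier Φ)

lemma signedDist_nonpos {X : Type*} [MetricSpace X] {x : X} {Φ : Set X} (hx : x ∈ Φ) :
    signedPtSetDist x Φ ≤ 0 := by
  simp only [signedPtSetDist, if_pos hx, neg_nonpos]
  exact Metric.infDist_nonneg

lemma mem_of_signedDist_nonpos {X : Type*} [MetricSpace X] {x : X} {Φ : Set X}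
    (hclosed : IsClosed Φ) (hfr : (frontier Φ).Nonempty) (h : signedPtSetDist x Φ ≤ 0) :
    x ∈ Φ := by
  by_contra hx
  simp only [signedPtSetDist, if_neg hx] at h
  have h0 : Metric.infDist x (frontier Φ) = 0 :=
    le_antisymm h Metric.infDist_nonneg
  have : x ∈ frontier Φ := by
    have := (Metric.infDist_zero_of_mem_closure (x := x)
      (s := frontier Φ))
    have hx' : x ∈ closure (frontier Φ) :=
      (Metric.mem_closure_iff_infDist_zero hfr).mpr h0
    rwa [isClosed_frontier.closure_eq] at hx'
  exact hx (hclosed.frontier_subset this)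

theorem stmt_10 {E U W : Type*} [MetricSpace E]
    (Φ : Set E) (hclosed : IsClosed Φ) (hfr : (frontier Φ).Nonempty)
    (Γ : Set U) (W' : Set W) (hΓ : Γ.Nonempty) (hW : W'.Nonempty)
    (f : E → U → W → E)
    (hbdd : ∀ σ ∈ Φ, ∀ u ∈ Γ, BddAbove ((fun ω => signedPtSetDist (f σ u ω) Φ) '' W'))
    (hadv : ∀ σ ∈ Φ, ∃ ustar ∈ Γ,
      (∀ u ∈ Γ, sSup ((fun ω => signedPtSetDist (f σ u ω) Φ) '' W') ≤
        sSup ((fun ω => signedPtSetDist (f σ ustar ω) Φ) '' W')) ∧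
      ∀ ω ∈ W', f σ ustar ω ∈ Φ) :
    ∀ σ ∈ Φ, ∀ u ∈ Γ, ∀ ω ∈ W', f σ u ω ∈ Φ := by
  intro σ hσ u hu ω hω
  obtain ⟨ustar, hustar, hmax, hsafe⟩ := hadv σ hσ
  have hsup_star : sSup ((fun ω => signedPtSetDist (f σ ustar ω) Φ) '' W') ≤ 0 := by
    apply Real.sSup_nonpos
    rintro y ⟨ω', hω', rfl⟩
    exact signedDist_nonpos (hsafe ω' hω')
  have hle : signedPtSetDist (f σ u ω) Φ ≤ 0 :=
    le_trans (le_csSup (hbdd σ hσ u hu) ⟨ω, hω, rfl⟩)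
      (le_trans (hmax u hu) hsup_star)
  exact mem_of_signedDist_nonpos hclosed hfr hle
end
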